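/- Let (X, d) be a metric space equipped with a finite Borel measure μ, let ψ be a cutoff function, let r > 0, and suppose there is a constant c > 0 such that ψ_r(x) := ∫_X ψ(d(x,z)/r) dμ(z) ≥ c for every x ∈ X. Then for every integrable function u : X → ℝ^ν, the mollified map ψ_r ∗ u : X → ℝ^ν, defined by (ψ_r ∗ u)(x) = (1/ψ_r(x)) ∫_X ψ(d(x,z)/r) u(z) dμ(z), is Lipschitz continuous; moreover its Lipschitz constant is at most C · ∫_X ‖u‖ dμ, where C depends only on Lip(ψ), r, c and μ(X). -/

import Mathlib

open MeasureTheory Metric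

/-- On a metric space with a finite Borel measure (total mass `V`), if `ψ` is a
cutoff function with Lipschitz constant `L` and `ψ_r(x) ≥ c > 0` for every `x`, then for every
integrable `u : X → ℝ^ν` the normalized mollification `ψ_r ∗ u` is Lipschitz with constant at
most `C · ∫ ‖u‖ dμ`, where `C` depends only on `L`, `r`, `c` and `μ(X) = V`. -/
theorem stmt_1 (L : NNReal) (r c : ℝ) (V : ENNReal)
    (hr : 0 < r) (hc : 0 < c) (hV : V ≠ ⊤) :
    ∃ C : ℝ, 0 < C ∧
      ∀ (X : Type) [MetricSpace X] [MeasurableSpace X] [BorelSpace X]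
        (μ : Measure X), μ Set.univ = V →
      ∀ (ψ : ℝ → ℝ), LipschitzOnWith L ψ (Set.Ici 0) →
        (∀ t : ℝ, 0 ≤ t → ψ t ∈ Set.Icc (0 : ℝ) 1) →
        (∀ t : ℝ, 1 ≤ t → ψ t = 0) →
        (∀ x : X, c ≤ ∫ z, ψ (dist x z / r) ∂μ) →
      ∀ (ν : ℕ) (u : X → EuclideanSpace ℝ (Fin ν)), Integrable u μ →
        LipschitzWith (Real.toNNReal (C * ∫ z, ‖u z‖ ∂μ))
          (fun x : X =>
            (∫ z, ψ (dist x z / r) ∂μ)⁻¹ • ∫ z, ψ (dist x z / r) • u z ∂μ) := by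
  set Vr : ℝ := V.toReal with hVrdef
  have hVr0 : 0 ≤ Vr := ENNReal.toReal_nonneg
  refine ⟨(L / r) * (1 / c) * (1 + Vr / c) + 1, by positivity, ?_⟩
  intro X _ _ _ μ hμ ψ hLip hψ01 hψ1 hlb ν u hu
  haveI : IsFiniteMeasure μ := ⟨by rw [hμ]; exact lt_top_iff_ne_top.mpr hV⟩
  set I : ℝ := ∫ z, ‖u z‖ ∂μ with hIdef
  have hI0 : 0 ≤ I := integral_nonneg fun z => norm_nonneg _
  set f : X → ℝ := fun x => ∫ z, ψ (dist x z / r) ∂μ with hfdef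
  set g : X → EuclideanSpace ℝ (Fin ν) := fun x => ∫ z, ψ (dist x z / r) • u z ∂μ with hgdef
  have hcont : ∀ x : X, Continuous fun z : X => ψ (dist x z / r) := by
    intro x
    exact hLip.continuousOn.comp_continuous
      ((continuous_const.dist continuous_id).div_const r)
      (fun z => div_nonneg dist_nonneg hr.le)
  have hψlip : ∀ a b : ℝ, 0 ≤ a → 0 ≤ b → |ψ a - ψ b| ≤ (L : ℝ) * |a - b| := by
    intro a b ha hb
    have := hLip.dist_le_mul a ha b hb
    simpa [Real.dist_eq] using this
  have habs : ∀ t : ℝ, 0 ≤ t → |ψ t| ≤ 1 := by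
    intro t ht
    have h := hψ01 t ht
    rw [abs_le]; constructor <;> linarith [h.1, h.2]
  have hint1 : ∀ x : X, Integrable (fun z => ψ (dist x z / r)) μ := fun x =>
    (integrable_const (1 : ℝ)).mono' (hcont x).aestronglyMeasurable
      (Filter.Eventually.of_forall fun z => by
        simpa [Real.norm_eq_abs] using habs _ (div_nonneg dist_nonneg hr.le))
  have hintg : ∀ x : X, Integrable (fun z => ψ (dist x z / r) • u z) μ := fun x =>
    hu.norm.mono' ((hcont x).aestronglyMeasurable.smul hu.1)
      (Filter.Eventually.of_forall fun z => by
        rw [norm_smul, Real.norm_eq_abs]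
        exact mul_le_of_le_one_left (norm_nonneg _) (habs _ (div_nonneg dist_nonneg hr.le)))
  have hfc : ∀ x : X, c ≤ f x := hlb
  have hfpos : ∀ x : X, 0 < f x := fun x => lt_of_lt_of_le hc (hfc x)
  -- pointwise lipschitz bound on the kernel
  have hker : ∀ (x y z : X),
      |ψ (dist x z / r) - ψ (dist y z / r)| ≤ (L : ℝ) / r * dist x y := by
    intro x y z
    calc |ψ (dist x z / r) - ψ (dist y z / r)|
        ≤ (L : ℝ) * |dist x z / r - dist y z / r| :=
          hψlip _ _ (div_nonneg dist_nonneg hr.le) (div_nonneg dist_nonneg hr.le)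
      _ = (L : ℝ) * (|dist x z - dist y z| / r) := by
          rw [div_sub_div_same, abs_div, abs_of_pos hr]
      _ ≤ (L : ℝ) * (dist x y / r) := by
          have := abs_dist_sub_le x y z
          gcongr
      _ = (L : ℝ) / r * dist x y := by ring
  apply LipschitzWith.of_dist_le_mul
  intro x y
  have hC0 : 0 ≤ ((L : ℝ) / r * (1 / c) * (1 + Vr / c) + 1) * I := by positivity
  rw [Real.coe_toNNReal _ hC0, dist_eq_norm]
  set d : ℝ := dist x y with hddef
  have hd0 : 0 ≤ d := dist_nonneg
  -- bound on g x - g y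
  have hgsub : ‖g x - g y‖ ≤ (L : ℝ) / r * d * I := by
    have heq : g x - g y = ∫ z, (ψ (dist x z / r) - ψ (dist y z / r)) • u z ∂μ := by
      rw [hgdef]
      simp only []
      rw [← integral_sub (hintg x) (hintg y)]
      congr 1; ext z; rw [sub_smul]
    rw [heq]
    calc ‖∫ z, (ψ (dist x z / r) - ψ (dist y z / r)) • u z ∂μ‖
        ≤ ∫ z, ‖(ψ (dist x z / r) - ψ (dist y z / r)) • u z‖ ∂μ :=
          norm_integral_le_integral_norm _
      _ ≤ ∫ z, ((L : ℝ) / r * d) * ‖u z‖ ∂μ := by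
          apply integral_mono_of_nonneg
          · exact Filter.Eventually.of_forall fun z => norm_nonneg _
          · exact hu.norm.const_mul _
          · exact Filter.Eventually.of_forall fun z => by
              dsimp only
              rw [norm_smul, Real.norm_eq_abs]
              exact mul_le_mul_of_nonneg_right (hker x y z) (norm_nonneg _)
      _ = (L : ℝ) / r * d * I := by rw [integral_const_mul]
  -- bound on f x - f y
  have hfsub : |f x - f y| ≤ (L : ℝ) / r * d * Vr := by
    have heq : f x - f y = ∫ z, (ψ (dist x z / r) - ψ (dist y z / r)) ∂μ := by
      rw [hfdef]; simp only []; rw [← integral_sub (hint1 x) (hint1 y)]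
    rw [heq]
    calc |∫ z, (ψ (dist x z / r) - ψ (dist y z / r)) ∂μ|
        ≤ ∫ z, |ψ (dist x z / r) - ψ (dist y z / r)| ∂μ := by
          simpa [Real.norm_eq_abs] using
            norm_integral_le_integral_norm (fun z => ψ (dist x z / r) - ψ (dist y z / r)) (μ := μ)
      _ ≤ ∫ _z, (L : ℝ) / r * d ∂μ := by
          apply integral_mono_of_nonneg
          · exact Filter.Eventually.of_forall fun z => abs_nonneg _
          · exact integrable_const _
          · exact Filter.Eventually.of_forall fun z => hker x y z
      _ = (L : ℝ) / r * d * Vr := by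
          rw [integral_const, measureReal_def, hμ, ← hVrdef, smul_eq_mul]
          ring
  -- bound on g y
  have hgy : ‖g y‖ ≤ I := by
    calc ‖g y‖ ≤ ∫ z, ‖ψ (dist y z / r) • u z‖ ∂μ := norm_integral_le_integral_norm _
      _ ≤ ∫ z, ‖u z‖ ∂μ := by
          apply integral_mono_of_nonneg
          · exact Filter.Eventually.of_forall fun z => norm_nonneg _
          · exact hu.norm
          · exact Filter.Eventually.of_forall fun z => by
              dsimp only
              rw [norm_smul, Real.norm_eq_abs]
              exact mul_le_of_le_one_left (norm_nonneg _)
                (habs _ (div_nonneg dist_nonneg hr.le))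
      _ = I := rfl
  -- decompose
  have hdecomp : (f x)⁻¹ • g x - (f y)⁻¹ • g y
      = (f x)⁻¹ • (g x - g y) + ((f x)⁻¹ - (f y)⁻¹) • g y := by
    rw [smul_sub, sub_smul]; abel
  show ‖(f x)⁻¹ • g x - (f y)⁻¹ • g y‖ ≤ _
  rw [hdecomp]
  have hinv : |(f x)⁻¹ - (f y)⁻¹| ≤ (L : ℝ) / r * d * Vr / (c * c) := by
    rw [inv_sub_inv (hfpos x).ne' (hfpos y).ne', abs_div,
      abs_of_pos (mul_pos (hfpos x) (hfpos y)), abs_sub_comm]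
    have hxy : c * c ≤ f x * f y := mul_le_mul (hfc x) (hfc y) hc.le (hfpos x).le
    calc |f x - f y| / (f x * f y) ≤ |f x - f y| / (c * c) := by gcongr
      _ ≤ (L : ℝ) / r * d * Vr / (c * c) := by gcongr
  calc ‖(f x)⁻¹ • (g x - g y) + ((f x)⁻¹ - (f y)⁻¹) • g y‖
      ≤ ‖(f x)⁻¹ • (g x - g y)‖ + ‖((f x)⁻¹ - (f y)⁻¹) • g y‖ := norm_add_le _ _
    _ = (f x)⁻¹ * ‖g x - g y‖ + |(f x)⁻¹ - (f y)⁻¹| * ‖g y‖ := by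
        rw [norm_smul, norm_smul, Real.norm_eq_abs, Real.norm_eq_abs,
          abs_of_pos (inv_pos.mpr (hfpos x))]
    _ ≤ c⁻¹ * ((L : ℝ) / r * d * I) + ((L : ℝ) / r * d * Vr / (c * c)) * I := by
        apply add_le_add
        · exact mul_le_mul (inv_anti₀ hc (hfc x)) hgsub (norm_nonneg _)
            (by positivity)
        · exact mul_le_mul hinv hgy (norm_nonneg _) (by positivity)
    _ ≤ (((L : ℝ) / r * (1 / c) * (1 + Vr / c) + 1) * I) * d := by
        have key : c⁻¹ * ((L : ℝ) / r * d * I) + ((L : ℝ) / r * d * Vr / (c * c)) * I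
            = ((L : ℝ) / r * (1 / c) * (1 + Vr / c)) * I * d := by
          field_simp
        rw [key]
        nlinarith [mul_nonneg hI0 hd0]
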